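/- Let F be a strategyproof 2-facility mechanism on the line with bounded approximation ratio ρ for 3-agent instances. Suppose that for every (i|j,k)-well-separated instance z with z_i = a, F_2(z) ∈ {z_j, z_k}, and that there exists an (i|j,k)-well-separated instance x with x_i = a and F_2(x) = x_k. Then for every (i|j,k)-well-separated instance x' with x'_i = a and x_k < x'_k, F_2(x') = x'_k. -/
import Mathlib


noncomputable section

/-- Cost of an agent at location `a` under a pair of facilities. -/
def fcost (a : ℝ) (y : ℝ × ℝ) : ℝ := min |a - y.1| |a - y.2|

/-- Social cost: sum of the agents' distances to their nearest facility. -/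
def scost {n : ℕ} (x : Fin n → ℝ) (y : ℝ × ℝ) : ℝ := ∑ i, fcost (x i) y

/-- Optimal social cost over all placements of two facilities. -/
def optCost {n : ℕ} (x : Fin n → ℝ) : ℝ := ⨅ y : ℝ × ℝ, scost x y

/-- The mechanism outputs its facilities in increasing order. -/
def Ordered {n : ℕ} (F : (Fin n → ℝ) → ℝ × ℝ) : Prop := ∀ x, (F x).1 ≤ (F x).2

/-- No agent can strictly decrease her cost by misreporting her location. -/
def Strategyproof {n : ℕ} (F : (Fin n → ℝ) → ℝ × ℝ) : Prop :=
  ∀ (x : Fin n → ℝ) (i : Fin n) (y : ℝ),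
    fcost (x i) (F x) ≤ fcost (x i) (F (Function.update x i y))

/-- `F` has approximation ratio (at most) `ρ` for the social cost. -/
def ApproxRatio {n : ℕ} (F : (Fin n → ℝ) → ℝ × ℝ) (ρ : ℝ) : Prop :=
  ∀ x, scost x (F x) ≤ ρ * optCost x

/-- An `(i|j,k)`-well-separated 3-agent instance. -/
def WellSep (ρ : ℝ) (x : Fin 3 → ℝ) (i j k : Fin 3) : Prop :=
  x i < x j ∧ x j < x k ∧ ρ * (x k - x j) < x j - x i

/- ### Auxiliary material -/

/-- Canonical 3-agent instance with agent `i` at `a`, agent `j` at `t`, third agent at `s`. -/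
def can (i j : Fin 3) (a t s : ℝ) : Fin 3 → ℝ := fun m => if m = i then a else if m = j then t else s

lemma fin3_cases : ∀ (i j k m : Fin 3), i ≠ j → i ≠ k → j ≠ k → m = i ∨ m = j ∨ m = k := by decide

lemma fin3_univ : ∀ (i j k : Fin 3), i ≠ j → i ≠ k → j ≠ k →
    (Finset.univ : Finset (Fin 3)) = {i, j, k} := by decide

lemma sum_three (f : Fin 3 → ℝ) (i j k : Fin 3) (hij : i ≠ j) (hik : i ≠ k) (hjk : j ≠ k) :
    ∑ m, f m = f i + f j + f k := by
  rw [fin3_univ i j k hij hik hjk]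
  rw [Finset.sum_insert (by simp [hij, hik]), Finset.sum_insert (by simp [hjk]),
    Finset.sum_singleton, add_assoc]

lemma can_apply_i (i j : Fin 3) (a t s : ℝ) : can i j a t s i = a := by simp [can]

lemma can_apply_j (i j : Fin 3) (hij : i ≠ j) (a t s : ℝ) : can i j a t s j = t := by
  simp [can, Ne.symm hij]

lemma can_apply_k (i j k : Fin 3) (hik : i ≠ k) (hjk : j ≠ k) (a t s : ℝ) :
    can i j a t s k = s := by
  simp [can, Ne.symm hik, Ne.symm hjk]

lemma can_update_k (i j k : Fin 3) (hij : i ≠ j) (hik : i ≠ k) (hjk : j ≠ k) (a t s s' : ℝ) :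
    Function.update (can i j a t s) k s' = can i j a t s' := by
  funext m
  rcases fin3_cases i j k m hij hik hjk with h | h | h
  · rw [h, Function.update_of_ne hik, can_apply_i, can_apply_i]
  · rw [h, Function.update_of_ne hjk, can_apply_j i j hij, can_apply_j i j hij]
  · rw [h, Function.update_self, can_apply_k i j k hik hjk]

lemma can_update_j (i j k : Fin 3) (hij : i ≠ j) (hik : i ≠ k) (hjk : j ≠ k) (a t t' s : ℝ) :
    Function.update (can i j a t s) j t' = can i j a t' s := by
  funext m
  rcases fin3_cases i j k m hij hik hjk with h | h | h
  · rw [h, Function.update_of_ne hij, can_apply_i, can_apply_i]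
  · rw [h, Function.update_self, can_apply_j i j hij]
  · rw [h, Function.update_of_ne (Ne.symm hjk), can_apply_k i j k hik hjk,
      can_apply_k i j k hik hjk]

lemma eq_can (i j k : Fin 3) (hij : i ≠ j) (hik : i ≠ k) (hjk : j ≠ k) (a : ℝ)
    (x : Fin 3 → ℝ) (hxa : x i = a) : x = can i j a (x j) (x k) := by
  funext m
  rcases fin3_cases i j k m hij hik hjk with h | h | h
  · rw [h, can_apply_i]; exact hxa
  · rw [h, can_apply_j i j hij]
  · rw [h, can_apply_k i j k hik hjk]

lemma wellSep_can (i j k : Fin 3) (hij : i ≠ j) (hik : i ≠ k) (hjk : j ≠ k) (ρ a t s : ℝ)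
    (h1 : a < t) (h2 : t < s) (h3 : ρ * (s - t) < t - a) :
    WellSep ρ (can i j a t s) i j k := by
  unfold WellSep
  rw [can_apply_i, can_apply_j i j hij, can_apply_k i j k hik hjk]
  exact ⟨h1, h2, h3⟩

lemma fcost_nonneg (a : ℝ) (y : ℝ × ℝ) : 0 ≤ fcost a y :=
  le_min (abs_nonneg _) (abs_nonneg _)

lemma scost_nonneg {n : ℕ} (x : Fin n → ℝ) (y : ℝ × ℝ) : 0 ≤ scost x y :=
  Finset.sum_nonneg fun m _ => fcost_nonneg _ _

lemma opt_le {n : ℕ} (x : Fin n → ℝ) (y : ℝ × ℝ) : optCost x ≤ scost x y :=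
  ciInf_le ⟨0, by rintro r ⟨y', rfl⟩; exact scost_nonneg x y'⟩ y

lemma scost_apply (i j k : Fin 3) (hij : i ≠ j) (hik : i ≠ k) (hjk : j ≠ k) (a t s : ℝ)
    (y : ℝ × ℝ) : scost (can i j a t s) y = fcost a y + fcost t y + fcost s y := by
  unfold scost
  rw [sum_three (fun m => fcost (can i j a t s m) y) i j k hij hik hjk]
  rw [can_apply_i, can_apply_j i j hij, can_apply_k i j k hik hjk]

/-- By the approximation ratio, the first facility is within `ρ (s - t)` of `a`
whenever the second facility is at `s`. -/
lemma F1_near (F : (Fin 3 → ℝ) → ℝ × ℝ) (ρ : ℝ) (hρ : 1 ≤ ρ)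
    (happ : ApproxRatio F ρ) (i j k : Fin 3) (hij : i ≠ j) (hik : i ≠ k) (hjk : j ≠ k)
    (a t s : ℝ) (h1 : a < t) (h2 : t < s) (h3 : ρ * (s - t) < t - a)
    (hF2 : (F (can i j a t s)).2 = s) :
    |(F (can i j a t s)).1 - a| ≤ ρ * (s - t) := by
  have hst : s - t ≤ t - a := by
    nlinarith [mul_nonneg (by linarith : (0:ℝ) ≤ ρ - 1) (by linarith : (0:ℝ) ≤ s - t)]
  have hsy : scost (can i j a t s) ((a, s) : ℝ × ℝ) = s - t := by
    rw [scost_apply i j k hij hik hjk]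
    have e1 : fcost a ((a, s) : ℝ × ℝ) = 0 := by
      show min |a - a| |a - s| = 0
      rw [sub_self, abs_zero]
      exact min_eq_left (abs_nonneg _)
    have e2 : fcost t ((a, s) : ℝ × ℝ) = s - t := by
      show min |t - a| |t - s| = s - t
      rw [abs_of_nonneg (by linarith : (0:ℝ) ≤ t - a),
        abs_of_nonpos (by linarith : t - s ≤ 0), neg_sub]
      exact min_eq_right hst
    have e3 : fcost s ((a, s) : ℝ × ℝ) = 0 := by
      show min |s - a| |s - s| = 0
      rw [sub_self, abs_zero]
      exact min_eq_right (abs_nonneg _)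
    rw [e1, e2, e3]; ring
  have hopt : optCost (can i j a t s) ≤ s - t := hsy ▸ opt_le _ _
  have hsc : scost (can i j a t s) (F (can i j a t s)) ≤ ρ * (s - t) :=
    le_trans (happ _) (mul_le_mul_of_nonneg_left hopt (by linarith))
  have hfa : fcost a (F (can i j a t s)) ≤ ρ * (s - t) := by
    have hsum := scost_apply i j k hij hik hjk a t s (F (can i j a t s))
    have n1 := fcost_nonneg t (F (can i j a t s))
    have n2 := fcost_nonneg s (F (can i j a t s))
    linarith [hsc, hsum.symm.le, hsum.le]
  have hmin : min |a - (F (can i j a t s)).1| |a - (F (can i j a t s)).2| ≤ ρ * (s - t) := hfa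
  rw [hF2] at hmin
  have habs : |a - s| = s - a := by
    rw [abs_sub_comm, abs_of_nonneg (by linarith : (0:ℝ) ≤ s - a)]
  rw [habs] at hmin
  rcases le_total |a - (F (can i j a t s)).1| (s - a) with h | h
  · rw [min_eq_left h] at hmin; rwa [abs_sub_comm] at hmin
  · rw [min_eq_right h] at hmin; linarith

/-- Moving agent `k`: if `F₂ = s₁` with `k` at `s₁`, but `F₂ = t` with `k` at `s₂ > t`,
then `s₂` must be far from `s₁`. -/
lemma lemA (F : (Fin 3 → ℝ) → ℝ × ℝ) (hord : Ordered F) (hsp : Strategyproof F)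
    (i j k : Fin 3) (hij : i ≠ j) (hik : i ≠ k) (hjk : j ≠ k)
    (a t s₁ s₂ : ℝ) (hts2 : t < s₂)
    (h1 : (F (can i j a t s₁)).2 = s₁) (h2 : (F (can i j a t s₂)).2 = t) :
    s₂ - t ≤ |s₂ - s₁| := by
  have hs := hsp (can i j a t s₂) k s₁
  rw [can_apply_k i j k hik hjk, can_update_k i j k hij hik hjk] at hs
  have hR : fcost s₂ (F (can i j a t s₁)) ≤ |s₂ - s₁| := by
    unfold fcost
    rw [h1]
    exact min_le_right _ _
  have hF1 : (F (can i j a t s₂)).1 ≤ t := by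
    have h := hord (can i j a t s₂)
    rwa [h2] at h
  have hL : s₂ - t ≤ fcost s₂ (F (can i j a t s₂)) := by
    show s₂ - t ≤ min |s₂ - (F (can i j a t s₂)).1| |s₂ - (F (can i j a t s₂)).2|
    apply le_min
    · exact le_trans (by linarith) (le_abs_self _)
    · rw [h2]; exact le_trans (le_refl _) (le_abs_self _)
  linarith

/-- Moving agent `j`: if `F₂ = s` with `j` at `t₁`, but `F₂ = t₂` with `j` at `t₂`,
then `t₂` must be far from `t₁`. -/
lemma lemB (F : (Fin 3 → ℝ) → ℝ × ℝ) (ρ : ℝ) (hρ : 1 ≤ ρ)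
    (hsp : Strategyproof F) (happ : ApproxRatio F ρ)
    (i j k : Fin 3) (hij : i ≠ j) (hik : i ≠ k) (hjk : j ≠ k)
    (a t₁ t₂ s : ℝ) (h1a : a < t₁) (h1s : t₁ < s) (h1sep : ρ * (s - t₁) < t₁ - a)
    (h1 : (F (can i j a t₁ s)).2 = s) (h2 : (F (can i j a t₂ s)).2 = t₂) :
    min (s - t₁) ((t₁ - a) - ρ * (s - t₁)) ≤ |t₁ - t₂| := by
  have hnear := F1_near F ρ hρ happ i j k hij hik hjk a t₁ s h1a h1s h1sep h1
  have hs := hsp (can i j a t₁ s) j t₂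
  rw [can_apply_j i j hij, can_update_j i j k hij hik hjk] at hs
  have hR : fcost t₁ (F (can i j a t₂ s)) ≤ |t₁ - t₂| := by
    unfold fcost
    rw [h2]
    exact min_le_right _ _
  have hL : min (s - t₁) ((t₁ - a) - ρ * (s - t₁)) ≤ fcost t₁ (F (can i j a t₁ s)) := by
    show _ ≤ min |t₁ - (F (can i j a t₁ s)).1| |t₁ - (F (can i j a t₁ s)).2|
    apply le_min
    · have htri : |t₁ - a| ≤ |t₁ - (F (can i j a t₁ s)).1| + |(F (can i j a t₁ s)).1 - a| :=
        abs_sub_le t₁ (F (can i j a t₁ s)).1 a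
      have habs : |t₁ - a| = t₁ - a := abs_of_nonneg (by linarith)
      have hb : (t₁ - a) - ρ * (s - t₁) ≤ |t₁ - (F (can i j a t₁ s)).1| := by linarith
      exact le_trans (min_le_right _ _) hb
    · rw [h1]
      have habs : |t₁ - s| = s - t₁ := by
        rw [abs_sub_comm, abs_of_nonneg (by linarith : (0:ℝ) ≤ s - t₁)]
      rw [habs]
      exact min_le_left _ _
  linarith

/-- Two nearby well-separated instances cannot make opposite choices. -/
lemma flip_bound (F : (Fin 3 → ℝ) → ℝ × ℝ) (ρ : ℝ) (hρ : 1 ≤ ρ)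
    (hord : Ordered F) (hsp : Strategyproof F) (happ : ApproxRatio F ρ)
    (i j k : Fin 3) (hij : i ≠ j) (hik : i ≠ k) (hjk : j ≠ k) (a : ℝ)
    (hall : ∀ z : Fin 3 → ℝ, z i = a → WellSep ρ z i j k → (F z).2 = z j ∨ (F z).2 = z k)
    (t s t' s' : ℝ)
    (hm1 : a < t) (hm2 : t < s') (hm3 : ρ * (s' - t) < t - a)
    (h1 : (F (can i j a t s)).2 = s)
    (h2 : (F (can i j a t' s')).2 = t') :
    s' - t ≤ |s' - s| ∨ min (s' - t) ((t - a) - ρ * (s' - t)) ≤ |t - t'| := by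
  have hws := wellSep_can i j k hij hik hjk ρ a t s' hm1 hm2 hm3
  rcases hall (can i j a t s') (can_apply_i i j a t s') hws with hmid | hmid
  · rw [can_apply_j i j hij] at hmid
    exact Or.inl (lemA F hord hsp i j k hij hik hjk a t s s' hm2 h1 hmid)
  · rw [can_apply_k i j k hik hjk] at hmid
    exact Or.inr (lemB F ρ hρ hsp happ i j k hij hik hjk a t t' s' hm1 hm2 hm3 hmid h2)

/-- The region of well-separated `(t, s)` parameter pairs. -/
def wsD (ρ a : ℝ) : Set (ℝ × ℝ) := {p | a < p.1 ∧ p.1 < p.2 ∧ ρ * (p.2 - p.1) < p.1 - a}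

lemma mem_wsD {ρ a : ℝ} {p : ℝ × ℝ} :
    p ∈ wsD ρ a ↔ a < p.1 ∧ p.1 < p.2 ∧ ρ * (p.2 - p.1) < p.1 - a := Iff.rfl

lemma combo_lt {α β x y c : ℝ} (hα : 0 ≤ α) (hβ : 0 ≤ β) (hαβ : α + β = 1)
    (hx : c < x) (hy : c < y) : c < α * x + β * y := by
  rcases eq_or_lt_of_le hα with h | h
  · obtain rfl : α = 0 := h.symm
    obtain rfl : β = 1 := by linarith
    simpa using hy
  · have hc : α * c + β * c = c := by rw [← add_mul, hαβ, one_mul]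
    have h1 := mul_lt_mul_of_pos_left hx h
    have h2 := mul_le_mul_of_nonneg_left hy.le hβ
    linarith

lemma wsD_convex (ρ a : ℝ) : Convex ℝ (wsD ρ a) := by
  rintro p hp q hq α β hα hβ hαβ
  obtain ⟨hp1, hp2, hp3⟩ := mem_wsD.mp hp
  obtain ⟨hq1, hq2, hq3⟩ := mem_wsD.mp hq
  rw [mem_wsD]
  have e1 : (α • p + β • q).1 = α * p.1 + β * q.1 := rfl
  have e2 : (α • p + β • q).2 = α * p.2 + β * q.2 := rfl
  rw [e1, e2]
  have ha : α * a + β * a = a := by rw [← add_mul, hαβ, one_mul]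
  refine ⟨?_, ?_, ?_⟩
  · have := combo_lt hα hβ hαβ hp1 hq1
    exact this
  · have := combo_lt hα hβ hαβ (show (0:ℝ) < p.2 - p.1 by linarith)
      (show (0:ℝ) < q.2 - q.1 by linarith)
    nlinarith [this]
  · have := combo_lt hα hβ hαβ (show (0:ℝ) < (p.1 - a) - ρ * (p.2 - p.1) by linarith)
      (show (0:ℝ) < (q.1 - a) - ρ * (q.2 - q.1) by linarith)
    nlinarith [this, ha]

lemma wsD_open (ρ a : ℝ) : IsOpen (wsD ρ a) := by
  have h1 : IsOpen {p : ℝ × ℝ | a < p.1} := isOpen_lt continuous_const continuous_fst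
  have h2 : IsOpen {p : ℝ × ℝ | p.1 < p.2} := isOpen_lt continuous_fst continuous_snd
  have h3 : IsOpen {p : ℝ × ℝ | ρ * (p.2 - p.1) < p.1 - a} :=
    isOpen_lt (continuous_const.mul (continuous_snd.sub continuous_fst))
      (continuous_fst.sub continuous_const)
  have he : wsD ρ a = {p : ℝ × ℝ | a < p.1} ∩ ({p : ℝ × ℝ | p.1 < p.2} ∩
      {p : ℝ × ℝ | ρ * (p.2 - p.1) < p.1 - a}) := by
    ext p
    simp [wsD, Set.mem_inter_iff, Set.mem_setOf_eq, and_assoc]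
  rw [he]
  exact h1.inter (h2.inter h3)

/-- Claim `moving-backwards`: suppose that for every `(i|j,k)`-well-separated
instance `z` with `z_i = a`, `F₂(z) ∈ {z_j, z_k}`, and that there is an
`(i|j,k)`-well-separated instance `x` with `x_i = a` and `F₂(x) = x_k`.
Then every `(i|j,k)`-well-separated instance `x'` with `x'_i = a` and
`x_k < x'_k` has `F₂(x') = x'_k`. -/
theorem moving_backwards (F : (Fin 3 → ℝ) → ℝ × ℝ) (ρ : ℝ) (hρ : 1 ≤ ρ)
    (hord : Ordered F) (hsp : Strategyproof F) (happ : ApproxRatio F ρ)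
    (i j k : Fin 3) (hij : i ≠ j) (hik : i ≠ k) (hjk : j ≠ k) (a : ℝ)
    (hall : ∀ z : Fin 3 → ℝ, z i = a → WellSep ρ z i j k →
      (F z).2 = z j ∨ (F z).2 = z k)
    (x : Fin 3 → ℝ) (hxa : x i = a) (hws : WellSep ρ x i j k)
    (hF : (F x).2 = x k)
    (x' : Fin 3 → ℝ) (hx'a : x' i = a) (hws' : WellSep ρ x' i j k)
    (hgt : x k < x' k) :
    (F x').2 = x' k := by
  classical
  obtain ⟨hab, hbc, hsep⟩ := hws
  obtain ⟨hab', hbc', hsep'⟩ := hws'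
  rw [hxa] at hab hsep
  rw [hx'a] at hab' hsep'
  have hD'open := wsD_open ρ a
  haveI : PreconnectedSpace (wsD ρ a) := Subtype.preconnectedSpace (wsD_convex ρ a).isPreconnected
  set G : Set (wsD ρ a) := {p | (F (can i j a p.1.1 p.1.2)).2 = p.1.2} with hGdef
  -- G is open
  have hGopen : IsOpen G := by
    rw [Metric.isOpen_iff]
    rintro ⟨⟨t, s⟩, hts⟩ hp
    obtain ⟨ht1, ht2, ht3⟩ := mem_wsD.mp hts
    have hp' : (F (can i j a t s)).2 = s := hp
    obtain ⟨ε₀, hε₀, hball⟩ := Metric.isOpen_iff.mp hD'open (t, s) hts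
    set ε := min ε₀ (min ((s - t) / 2) (((t - a) - ρ * (s - t)) / (ρ + 2))) with hεdef
    have hρ2 : (0:ℝ) < ρ + 2 := by linarith
    have hεpos : 0 < ε := lt_min hε₀ (lt_min (by linarith) (div_pos (by linarith) hρ2))
    refine ⟨ε, hεpos, ?_⟩
    rintro ⟨⟨t', s'⟩, hq⟩ hqball
    obtain ⟨hq1, hq2, hq3⟩ := mem_wsD.mp hq
    have hd : max |t' - t| |s' - s| < ε := by
      have h := Metric.mem_ball.mp hqball
      rw [Subtype.dist_eq] at h
      simpa [Prod.dist_eq, Real.dist_eq] using h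
    have hdt : |t' - t| < ε := lt_of_le_of_lt (le_max_left _ _) hd
    have hds : |s' - s| < ε := lt_of_le_of_lt (le_max_right _ _) hd
    obtain ⟨hdt1, hdt2⟩ := abs_lt.mp hdt
    obtain ⟨hds1, hds2⟩ := abs_lt.mp hds
    have hεs : ε ≤ (s - t) / 2 := le_trans (min_le_right _ _) (min_le_left _ _)
    have hεd : ε * (ρ + 2) ≤ (t - a) - ρ * (s - t) :=
      (le_div_iff₀ hρ2).mp (le_trans (min_le_right _ _) (min_le_right _ _))
    have hε₀' : ε ≤ ε₀ := min_le_left _ _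
    show _ ∈ G
    simp only [hGdef, Set.mem_setOf_eq]
    by_contra hcon
    have hq' : (F (can i j a t' s')).2 = t' := by
      rcases hall (can i j a t' s') (can_apply_i i j a t' s')
          (wellSep_can i j k hij hik hjk ρ a t' s' hq1 hq2 hq3) with h | h
      · rwa [can_apply_j i j hij] at h
      · rw [can_apply_k i j k hik hjk] at h; exact absurd h hcon
    have hmid : ((t, s') : ℝ × ℝ) ∈ wsD ρ a := by
      apply hball
      rw [Metric.mem_ball, Prod.dist_eq]
      apply max_lt
      · rw [dist_self]; exact hε₀
      · rw [Real.dist_eq]; exact lt_of_lt_of_le hds hε₀'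
    obtain ⟨hm1, hm2, hm3⟩ := mem_wsD.mp hmid
    rcases flip_bound F ρ hρ hord hsp happ i j k hij hik hjk a hall t s t' s'
        hm1 hm2 hm3 hp' hq' with hb | hb
    · linarith
    · have hA : ε < s' - t := by linarith
      have hB : ε < (t - a) - ρ * (s' - t) := by
        nlinarith [mul_le_mul_of_nonneg_left (by linarith : s' - t ≤ (s - t) + ε)
          (by linarith : (0:ℝ) ≤ ρ)]
      have hmin' : ε < min (s' - t) ((t - a) - ρ * (s' - t)) := lt_min hA hB
      have habs' : |t - t'| < ε := by rw [abs_sub_comm]; exact hdt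
      linarith
  -- Gᶜ is open
  have hGcopen : IsOpen Gᶜ := by
    rw [Metric.isOpen_iff]
    rintro ⟨⟨t, s⟩, hts⟩ hp
    obtain ⟨ht1, ht2, ht3⟩ := mem_wsD.mp hts
    have hp' : ¬(F (can i j a t s)).2 = s := hp
    have hpt : (F (can i j a t s)).2 = t := by
      rcases hall (can i j a t s) (can_apply_i i j a t s)
          (wellSep_can i j k hij hik hjk ρ a t s ht1 ht2 ht3) with h | h
      · rwa [can_apply_j i j hij] at h
      · rw [can_apply_k i j k hik hjk] at h; exact absurd h hp'
    obtain ⟨ε₀, hε₀, hball⟩ := Metric.isOpen_iff.mp hD'open (t, s) hts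
    set ε := min ε₀ (min ((s - t) / 2) (((t - a) - ρ * (s - t)) / (ρ + 2))) with hεdef
    have hρ2 : (0:ℝ) < ρ + 2 := by linarith
    have hεpos : 0 < ε := lt_min hε₀ (lt_min (by linarith) (div_pos (by linarith) hρ2))
    refine ⟨ε, hεpos, ?_⟩
    rintro ⟨⟨t', s'⟩, hq⟩ hqball
    obtain ⟨hq1, hq2, hq3⟩ := mem_wsD.mp hq
    have hd : max |t' - t| |s' - s| < ε := by
      have h := Metric.mem_ball.mp hqball
      rw [Subtype.dist_eq] at h
      simpa [Prod.dist_eq, Real.dist_eq] using h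
    have hdt : |t' - t| < ε := lt_of_le_of_lt (le_max_left _ _) hd
    have hds : |s' - s| < ε := lt_of_le_of_lt (le_max_right _ _) hd
    obtain ⟨hdt1, hdt2⟩ := abs_lt.mp hdt
    obtain ⟨hds1, hds2⟩ := abs_lt.mp hds
    have hεs : ε ≤ (s - t) / 2 := le_trans (min_le_right _ _) (min_le_left _ _)
    have hεd : ε * (ρ + 2) ≤ (t - a) - ρ * (s - t) :=
      (le_div_iff₀ hρ2).mp (le_trans (min_le_right _ _) (min_le_right _ _))
    have hε₀' : ε ≤ ε₀ := min_le_left _ _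
    show _ ∈ Gᶜ
    intro hconG
    have hcon : (F (can i j a t' s')).2 = s' := hconG
    have hmid : ((t', s) : ℝ × ℝ) ∈ wsD ρ a := by
      apply hball
      rw [Metric.mem_ball, Prod.dist_eq]
      apply max_lt
      · rw [Real.dist_eq]; exact lt_of_lt_of_le hdt hε₀'
      · rw [dist_self]; exact hε₀
    obtain ⟨hm1, hm2, hm3⟩ := mem_wsD.mp hmid
    rcases flip_bound F ρ hρ hord hsp happ i j k hij hik hjk a hall t' s' t s
        hm1 hm2 hm3 hcon hpt with hb | hb
    · have hb' : s - t' ≤ |s' - s| := by rwa [abs_sub_comm] at hb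
      linarith
    · have hA : ε < s - t' := by linarith
      have hB : ε ≤ (t' - a) - ρ * (s - t') := by
        nlinarith [mul_le_mul_of_nonneg_left (by linarith : s - t' ≤ (s - t) + ε)
          (by linarith : (0:ℝ) ≤ ρ)]
      have hmin' : ε ≤ min (s - t') ((t' - a) - ρ * (s - t')) := le_min hA.le hB
      linarith
  -- conclude by connectedness
  have hclopen : IsClopen G := ⟨isOpen_compl_iff.mp hGcopen, hGopen⟩
  have hmemx : (⟨(x j, x k), mem_wsD.mpr ⟨hab, hbc, hsep⟩⟩ : wsD ρ a) ∈ G := by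
    show (F (can i j a (x j) (x k))).2 = x k
    rw [← eq_can i j k hij hik hjk a x hxa]
    exact hF
  rcases isClopen_iff.mp hclopen with hG | hG
  · rw [hG] at hmemx
    exact absurd hmemx (Set.notMem_empty _)
  · have hmemx' : (⟨(x' j, x' k), mem_wsD.mpr ⟨hab', hbc', hsep'⟩⟩ : wsD ρ a) ∈ G := by
      rw [hG]; trivial
    have h := hmemx'
    simp only [hGdef, Set.mem_setOf_eq] at h
    rw [eq_can i j k hij hik hjk a x' hx'a, can_apply_k i j k hik hjk]
    exact h
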